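/- An H-homothetic deformation of a 3-(α,δ)-Sasaki structure with parameters a > 0, b with c² = a + b > 0, given by η'_i = c η_i, ξ'_i = (1/c) ξ_i, φ'_i = φ_i, g' = a g + b ∑ᵢ η_i ⊗ η_i, yields a 3-(α',δ')-Sasaki structure with α' = αc/a and δ' = δ/c; in particular the sign of α'δ' equals the sign of αδ. -/

import Mathlib

def EvenPerm (i j k : Fin 3) : Prop :=
  (i, j, k) = (0, 1, 2) ∨ (i, j, k) = (1, 2, 0) ∨ (i, j, k) = (2, 0, 1)

/-- An H-homothetic deformation of a 3-(α,δ)-Sasaki structure with parameters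
`a > 0`, `b`, `c² = a + b > 0` yields a 3-(α',δ')-Sasaki structure with
`α' = αc/a`, `δ' = δ/c`; in particular `α'δ' = αδ/a` has the same sign as `αδ`. -/
theorem stmt3 {L : Type*} [AddCommGroup L] [Module ℝ L]
    (α δ a b c : ℝ) (hα : α ≠ 0) (ha : 0 < a) (hc2 : c ^ 2 = a + b) (hab : 0 < a + b)
    (α' δ' : ℝ) (hα' : α' = α * c / a) (hδ' : δ' = δ / c)
    (g g' : L → L → ℝ) (η η' : Fin 3 → L → ℝ) (φ : Fin 3 → L →ₗ[ℝ] L)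
    (ξ : Fin 3 → L)
    (Φ Φ' : Fin 3 → L → L → ℝ) (dη dη' : Fin 3 → L → L → ℝ)
    (hg' : ∀ X Y, g' X Y = a * g X Y + b * ∑ i, η i X * η i Y)
    (hη' : ∀ i X, η' i X = c * η i X)
    (hΦ : ∀ i X Y, Φ i X Y = g X (φ i Y))
    (hΦ' : ∀ i X Y, Φ' i X Y = g' X (φ i Y))
    (hdη' : ∀ i X Y, dη' i X Y = c * dη i X Y)
    (hηφ : ∀ i X, η i (φ i X) = 0)
    (hηφ2 : ∀ i j k, EvenPerm i j k → ∀ X, η i (φ j X) = η k X ∧ η j (φ i X) = -(η k X))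
    (hSasaki : ∀ i j k, EvenPerm i j k → ∀ X Y,
      dη i X Y = 2 * α * Φ i X Y + 2 * (α - δ) * (η j X * η k Y - η k X * η j Y)) :
    (∀ i j k, EvenPerm i j k → ∀ X Y,
      dη' i X Y = 2 * α' * Φ' i X Y + 2 * (α' - δ') * (η' j X * η' k Y - η' k X * η' j Y)) ∧
    α' * δ' = α * δ / a ∧ (0 < α' * δ' ↔ 0 < α * δ) := by
  have ha' : a ≠ 0 := ne_of_gt ha
  have hc : c ≠ 0 := by
    intro h
    rw [h] at hc2
    simp at hc2
    linarith
  have hb : b = c ^ 2 - a := by linarith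
  refine ⟨?_, ?_, ?_⟩
  · intro i j k hp X Y
    rcases hp with h | h | h <;>
      (simp only [Prod.mk.injEq] at h; obtain ⟨hi, hj, hk⟩ := h; subst hi; subst hj; subst hk)
    · have e1 := (hηφ2 0 1 2 (by left; rfl) Y).2
      have e2 := (hηφ2 2 0 1 (by right; right; rfl) Y).1
      rw [hdη', hSasaki 0 1 2 (by left; rfl), hΦ, hΦ', hg', hη', hη', hη', hη',
        Fin.sum_univ_three, hηφ 0 Y, e1, e2, hα', hδ', hb]
      field_simp
      ring
    · have e1 := (hηφ2 1 2 0 (by right; left; rfl) Y).2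
      have e2 := (hηφ2 0 1 2 (by left; rfl) Y).1
      rw [hdη', hSasaki 1 2 0 (by right; left; rfl), hΦ, hΦ', hg', hη', hη', hη', hη',
        Fin.sum_univ_three, hηφ 1 Y, e1, e2, hα', hδ', hb]
      field_simp
      ring
    · have e1 := (hηφ2 2 0 1 (by right; right; rfl) Y).2
      have e2 := (hηφ2 1 2 0 (by right; left; rfl) Y).1
      rw [hdη', hSasaki 2 0 1 (by right; right; rfl), hΦ, hΦ', hg', hη', hη', hη', hη',
        Fin.sum_univ_three, hηφ 2 Y, e1, e2, hα', hδ', hb]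
      field_simp
      ring
  · rw [hα', hδ']
    field_simp
  · have h : α' * δ' = α * δ / a := by rw [hα', hδ']; field_simp
    rw [h]
    constructor
    · intro hpos
      have h2 := mul_pos hpos ha
      rwa [div_mul_cancel₀ _ ha'] at h2
    · intro hpos
      exact div_pos hpos ha
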